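/- Let 0 < r₀ < r₁ and let (A, w) be an EYM solution on (r₀, r₁). If lim inf_{r → r₀⁺} A(r) > 0, then w(r) converges in the extended real numbers as r → r₀⁺; that is, lim inf_{r → r₀⁺} w(r) = lim sup_{r → r₀⁺} w(r). -/

import Mathlib

open Filter Topology Set

/-- The quantity Φ(r) = 1 − A(r) − (1 − w(r)²)²/r² − Λ·r². -/
noncomputable def Phi (Λ : ℝ) (A w : ℝ → ℝ) (r : ℝ) : ℝ :=
  1 - A r - (1 - (w r) ^ 2) ^ 2 / r ^ 2 - Λ * r ^ 2

/-- `(A, w)` is a static spherically symmetric Einstein SU(2)-Yang–Mills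
solution with cosmological constant `Λ` on the set `I`. -/
def IsEYM (Λ : ℝ) (A w : ℝ → ℝ) (I : Set ℝ) : Prop :=
  (∀ r ∈ I, DifferentiableAt ℝ A r) ∧
  (∀ r ∈ I, DifferentiableAt ℝ w r) ∧
  (∀ r ∈ I, DifferentiableAt ℝ (deriv w) r) ∧
  (∀ r ∈ I, r * deriv A r + 2 * A r * (deriv w r) ^ 2 = Phi Λ A w r) ∧
  (∀ r ∈ I, r ^ 2 * A r * deriv (deriv w) r + r * Phi Λ A w r * deriv w r
      + w r * (1 - (w r) ^ 2) = 0)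


lemma eym_neg {Λ : ℝ} {A w : ℝ → ℝ} {I : Set ℝ} (h : IsEYM Λ A w I) :
    IsEYM Λ A (fun r => -w r) I := by
  obtain ⟨h1, h2, h3, h4, h5⟩ := h
  have hd : deriv (fun r => -w r) = fun r => -deriv w r := by
    funext r; exact deriv.neg
  have hdd : deriv (deriv (fun r => -w r)) = fun r => -deriv (deriv w) r := by
    rw [hd]; funext r; exact deriv.neg
  have hφ : ∀ r, Phi Λ A (fun t => -w t) r = Phi Λ A w r := by
    intro r; simp only [Phi]; ring
  refine ⟨h1, fun r hr => (h2 r hr).neg, ?_, ?_, ?_⟩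
  · intro r hr; rw [hd]; exact (h3 r hr).neg
  · intro r hr; rw [hd, hφ r]
    have := h4 r hr
    simp only [neg_sq]
    linarith
  · intro r hr
    have hdd' : deriv (fun r => -deriv w r) = fun r => -deriv (deriv w) r := by
      funext r; exact deriv.neg
    rw [hd, hdd', hφ r]
    have := h5 r hr
    simp only
    linear_combination -this

lemma hasDerivAt_mass {Λ r₀ r₁ : ℝ} {A w : ℝ → ℝ} (hEYM : IsEYM Λ A w (Ioo r₀ r₁))
    (hr₀ : 0 < r₀) {r : ℝ} (hr : r ∈ Ioo r₀ r₁) :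
    HasDerivAt (fun t => t/2 - t * A t/2 - Λ * t^3/6)
      (A r * (deriv w r)^2 + (1 - (w r)^2)^2/(2*r^2)) r := by
  obtain ⟨h1, h2, h3, h4, h5⟩ := hEYM
  have hA := (h1 r hr).hasDerivAt
  have hd : HasDerivAt (fun t => t/2 - t*A t/2 - Λ*t^3/6)
      ((1:ℝ)/2 - (1*A r + r*deriv A r)/2 - Λ*(↑3*r^2)/6) r := by
    have d1 : HasDerivAt (fun t : ℝ => t/2) ((1:ℝ)/2) r := (hasDerivAt_id r).div_const 2
    have d2 : HasDerivAt (fun t : ℝ => t*A t/2) ((1*A r + r*deriv A r)/2) r :=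
      ((hasDerivAt_id r).mul hA).div_const 2
    have d3 : HasDerivAt (fun t : ℝ => Λ*t^3/6) (Λ*(↑3*r^2)/6) r := by
      have := (hasDerivAt_pow 3 r).const_mul Λ
      norm_num at this ⊢
      exact this.div_const 6
    exact (d1.sub d2).sub d3
  convert hd using 1
  have h4r := h4 r hr
  rw [Phi] at h4r
  have hrne : r ≠ 0 := ne_of_gt (lt_trans hr₀ hr.1)
  field_simp at h4r ⊢
  nlinarith [h4r]

lemma hasDerivAt_u {Λ r₀ r₁ : ℝ} {A w : ℝ → ℝ} (hEYM : IsEYM Λ A w (Ioo r₀ r₁))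
    (hr₀ : 0 < r₀) {r : ℝ} (hr : r ∈ Ioo r₀ r₁) :
    HasDerivAt (fun t => t^2 * A t * deriv w t)
      (2*r*A r*deriv w r*(1-(deriv w r)^2) - w r*(1-(w r)^2)) r := by
  obtain ⟨h1, h2, h3, h4, h5⟩ := hEYM
  have hA := (h1 r hr).hasDerivAt
  have hw' := (h3 r hr).hasDerivAt
  have hd : HasDerivAt (fun t => t^2 * A t * deriv w t)
      ((↑2*r^1*A r + r^2*deriv A r)*deriv w r + r^2*A r*deriv (deriv w) r) r :=
    ((hasDerivAt_pow 2 r).mul hA).mul hw'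
  convert hd using 1
  have h4r := h4 r hr
  have h5r := h5 r hr
  push_cast
  linear_combination (-(r * deriv w r)) * h4r - h5r

lemma w2_ge_one {Λ r₀ r₁ : ℝ} {A w : ℝ → ℝ} (hEYM : IsEYM Λ A w (Ioo r₀ r₁))
    (hr₀ : 0 < r₀) {r : ℝ} (hr : r ∈ Ioo r₀ r₁)
    (hA : 2 + 2* |Λ| * r₁^2 + 10/r₀^2 ≤ A r) (hw : |w r| ≤ 2)
    (hw' : 4*r₁ ≤ deriv w r) : 1 ≤ deriv (deriv w) r := by
  obtain ⟨h1, h2, h3, h4, h5⟩ := hEYM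
  have h5r := h5 r hr
  have hrr : r₀ < r := hr.1
  have hr1 : r < r₁ := hr.2
  have hrpos : 0 < r := lt_trans hr₀ hrr
  have hten : (0:ℝ) < 10/r₀^2 := by positivity
  have hΛ0 : 0 ≤ 2* |Λ| * r₁^2 := by positivity
  have hApos : 0 < A r := by linarith
  have hQ : 0 ≤ (1 - (w r)^2)^2 / r^2 := by positivity
  have hΛr : -(Λ*r^2) ≤ |Λ| * r₁^2 := by
    have h1 : -(Λ*r^2) ≤ |Λ*r^2| := neg_le_abs _
    have h2 : |Λ*r^2| = |Λ| * r^2 := by rw [abs_mul, abs_of_nonneg (sq_nonneg r)]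
    have hr2 : r^2 ≤ r₁^2 := by nlinarith
    have h3' : |Λ| * r^2 ≤ |Λ| * r₁^2 := mul_le_mul_of_nonneg_left hr2 (abs_nonneg Λ)
    linarith
  have hφ2 : Phi Λ A w r ≤ -(A r/2) := by
    rw [Phi]; nlinarith
  have hrh : 0 ≤ r * deriv w r := by nlinarith
  have hstep : r * Phi Λ A w r * deriv w r ≤ -(2*r^2*A r) + 10 - 10 := by
    have e1 : r * Phi Λ A w r * deriv w r ≤ r * (-(A r/2)) * deriv w r := by
      have := mul_le_mul_of_nonneg_left hφ2 hrh
      nlinarith [this]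
    have e2 : r * (-(A r/2)) * deriv w r ≤ -(2*r^2*A r) := by
      nlinarith [mul_pos hrpos hApos]
    linarith
  have hW : w r * (1 - (w r)^2) ≤ 10 := by
    have := abs_le.1 hw
    nlinarith [this.1, this.2]
  have h10 : (10:ℝ) ≤ r^2 * A r := by
    have e3 : r₀^2 * (10/r₀^2) = 10 := by field_simp
    have e4 : r₀^2*(10/r₀^2) ≤ r^2 * A r :=
      mul_le_mul (by nlinarith) (by linarith) (le_of_lt hten) (by positivity)
    linarith
  have key : r^2*A r * 1 ≤ r^2*A r*deriv (deriv w) r := by linarith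
  exact le_of_mul_le_mul_left key (mul_pos (pow_pos hrpos 2) hApos)

lemma deriv_w_le {Λ r₀ r₁ : ℝ} {A w : ℝ → ℝ} (hEYM : IsEYM Λ A w (Ioo r₀ r₁))
    (hr₀ : 0 < r₀) (hr₁ : r₀ < r₁) {s₀ s₁ : ℝ}
    (hs₀ : s₀ ≤ r₁) (hs₁ : s₁ ∈ Ioo r₀ s₀)
    (hbig : ∀ r ∈ Ioo r₀ s₀, 2 + 2 * |Λ| * r₁^2 + 10/r₀^2 ≤ A r ∧ |w r| ≤ 2)
    (hcrit : deriv w s₁ = 0) :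
    ∀ r ∈ Ioc r₀ s₁, deriv w r ≤ 4*r₁ := by
  by_contra hcon
  push_neg at hcon
  obtain ⟨x, hx, hxw⟩ := hcon
  have hr₁pos : 0 < r₁ := lt_trans hr₀ hr₁
  have hxs₁ : x < s₁ := by
    rcases lt_or_eq_of_le hx.2 with h | h
    · exact h
    · rw [h, hcrit] at hxw; nlinarith
  have hsub : Icc x s₁ ⊆ Ioo r₀ r₁ :=
    fun t ht => ⟨lt_of_lt_of_le hx.1 ht.1, lt_of_le_of_lt ht.2 (lt_of_lt_of_le hs₁.2 hs₀)⟩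
  have hsub' : Icc x s₁ ⊆ Ioo r₀ s₀ :=
    fun t ht => ⟨lt_of_lt_of_le hx.1 ht.1, lt_of_le_of_lt ht.2 hs₁.2⟩
  have hcont : ContinuousOn (deriv w) (Icc x s₁) :=
    fun t ht => (hEYM.2.2.1 t (hsub ht)).continuousAt.continuousWithinAt
  set B := Icc x s₁ ∩ deriv w ⁻¹' Iic (4*r₁) with hB
  have hBclosed : IsClosed B := hcont.preimage_isClosed_of_isClosed isClosed_Icc isClosed_Iic
  have hBne : B.Nonempty := ⟨s₁, ⟨le_of_lt hxs₁, le_refl _⟩, by simp [hcrit]; positivity⟩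
  have hBbdd : BddBelow B := ⟨x, fun t ht => ht.1.1⟩
  set t₀ := sInf B with ht₀
  have ht₀B : t₀ ∈ B := hBclosed.csInf_mem hBne hBbdd
  have hxt₀ : x < t₀ := by
    rcases lt_or_eq_of_le ht₀B.1.1 with h | h
    · exact h
    · exfalso; have := ht₀B.2; rw [← h] at this
      exact absurd hxw (not_lt.2 this)
  have hlow : ∀ t ∈ Ico x t₀, 4*r₁ < deriv w t := by
    intro t ht
    by_contra hc
    push_neg at hc
    have htB : t ∈ B := ⟨⟨ht.1, le_trans (le_of_lt ht.2) ht₀B.1.2⟩, hc⟩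
    exact absurd (csInf_le hBbdd htB) (not_le.2 ht.2)
  have hmono : StrictMonoOn (deriv w) (Icc x t₀) := by
    apply strictMonoOn_of_deriv_pos (convex_Icc x t₀)
    · exact hcont.mono (Icc_subset_Icc_right ht₀B.1.2)
    · intro t ht
      rw [interior_Icc] at ht
      have htmem : t ∈ Ioo r₀ r₁ := hsub ⟨le_of_lt ht.1, le_trans (le_of_lt ht.2) ht₀B.1.2⟩
      have hb := hbig t (hsub' ⟨le_of_lt ht.1, le_trans (le_of_lt ht.2) ht₀B.1.2⟩)
      have := w2_ge_one hEYM hr₀ htmem hb.1 hb.2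
        (le_of_lt (hlow t ⟨le_of_lt ht.1, ht.2⟩))
      linarith
  have := hmono (left_mem_Icc.2 (le_of_lt hxt₀)) (right_mem_Icc.2 (le_of_lt hxt₀)) hxt₀
  have h2 := ht₀B.2
  simp only [mem_preimage, mem_Iic] at h2
  linarith

lemma localmax_sign {Λ r₀ r₁ : ℝ} {A w : ℝ → ℝ} (hEYM : IsEYM Λ A w (Ioo r₀ r₁))
    (hr₀ : 0 < r₀) {c : ℝ} (hc : c ∈ Ioo r₀ r₁) (hAc : 0 < A c)
    (hmax : IsLocalMax w c) : 0 ≤ w c * (1 - (w c)^2) := by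
  obtain ⟨h1, h2, h3, h4, h5⟩ := hEYM
  have hw'c : deriv w c = 0 := hmax.deriv_eq_zero
  have hcpos : 0 < c := lt_trans hr₀ hc.1
  have hw2 : deriv (deriv w) c ≤ 0 := by
    by_contra hpos
    push_neg at hpos
    have hd := (h3 c hc).hasDerivAt
    have hslope := hasDerivAt_iff_tendsto_slope.1 hd
    have hev : ∀ᶠ t in 𝓝[≠] c, 0 < slope (deriv w) c t :=
      hslope.eventually (eventually_gt_nhds hpos)
    have hmono' : 𝓝[>] c ≤ 𝓝[≠] c := nhdsWithin_mono c (fun t ht => ne_of_gt ht)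
    have hev' : ∀ᶠ t in 𝓝[>] c, 0 < deriv w t := by
      filter_upwards [hev.filter_mono hmono', self_mem_nhdsWithin] with t hs ht
      rw [slope_def_field] at hs
      rw [hw'c, sub_zero] at hs
      rcases div_pos_iff.1 hs with ⟨h, _⟩ | ⟨_, h⟩
      · exact h
      · exfalso; exact absurd (sub_pos.2 ht) (not_lt.2 (le_of_lt h))
    have hopen : ∀ᶠ t in 𝓝[>] c, t ∈ Ioo r₀ r₁ ∧ w t ≤ w c := by
      apply Filter.Eventually.filter_mono nhdsWithin_le_nhds
      exact ((isOpen_Ioo.eventually_mem hc).and hmax)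
    obtain ⟨u, hu, husub⟩ := mem_nhdsGT_iff_exists_Ioc_subset.1
      ((hev'.and hopen).filter_mono le_rfl)
    have husub : Ioc c u ⊆ {t | 0 < deriv w t ∧ t ∈ Ioo r₀ r₁ ∧ w t ≤ w c} := husub
    have hIccsub : Icc c u ⊆ Ioo r₀ r₁ := by
      intro t ht
      rcases eq_or_lt_of_le ht.1 with h | h
      · rw [← h]; exact hc
      · exact (husub ⟨h, ht.2⟩).2.1
    have hwc : ContinuousOn w (Icc c u) :=
      fun t ht => (h2 t (hIccsub ht)).continuousAt.continuousWithinAt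
    have hmono2 : StrictMonoOn w (Icc c u) := by
      apply strictMonoOn_of_deriv_pos (convex_Icc c u) hwc
      intro t ht
      rw [interior_Icc] at ht
      exact (husub ⟨ht.1, le_of_lt ht.2⟩).1
    have hcu : c < u := hu
    have := hmono2 (left_mem_Icc.2 (le_of_lt hcu)) (right_mem_Icc.2 (le_of_lt hcu)) hcu
    have hle := (husub ⟨hcu, le_refl u⟩).2.2
    linarith
  have h5c := h5 c hc
  rw [hw'c] at h5c
  nlinarith [mul_pos (pow_pos hcpos 2) hAc]

lemma exists_localmax {r₀ r₁ : ℝ} {w : ℝ → ℝ}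
    (hw : ∀ r ∈ Ioo r₀ r₁, ContinuousAt w r) {α β : ℝ} (hαβ : α < β)
    (hfα : ∃ᶠ r in 𝓝[>] r₀, w r < α) (hfβ : ∃ᶠ r in 𝓝[>] r₀, β < w r)
    {y : ℝ} (hy : r₀ < y) (hy' : y ≤ r₁) :
    ∃ c ∈ Ioo r₀ y, IsLocalMax w c ∧ β < w c := by
  obtain ⟨x₃, hwx₃, hx₃⟩ := (hfα.and_eventually (Ioo_mem_nhdsGT hy)).exists
  obtain ⟨x₂, hwx₂, hx₂⟩ := (hfβ.and_eventually (Ioo_mem_nhdsGT hx₃.1)).exists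
  obtain ⟨x₁, hwx₁, hx₁⟩ := (hfα.and_eventually (Ioo_mem_nhdsGT hx₂.1)).exists
  have hx₁₂ : x₁ < x₂ := hx₁.2
  have hx₂₃ : x₂ < x₃ := hx₂.2
  have hsub : Icc x₁ x₃ ⊆ Ioo r₀ r₁ := fun t ht =>
    ⟨lt_of_lt_of_le hx₁.1 ht.1, lt_of_le_of_lt ht.2 (lt_of_lt_of_le hx₃.2 hy')⟩
  have hwcont : ContinuousOn w (Icc x₁ x₃) :=
    fun t ht => (hw t (hsub ht)).continuousWithinAt
  obtain ⟨c, hcmem, hcmax⟩ := isCompact_Icc.exists_isMaxOn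
    (nonempty_Icc.2 (le_of_lt (lt_trans hx₁₂ hx₂₃))) hwcont
  have hwc : β < w c := lt_of_lt_of_le hwx₂ (hcmax ⟨le_of_lt hx₁₂, le_of_lt hx₂₃⟩)
  have hc1 : x₁ < c := by
    rcases eq_or_lt_of_le hcmem.1 with h | h
    · exfalso; rw [← h] at hwc; linarith
    · exact h
  have hc3 : c < x₃ := by
    rcases eq_or_lt_of_le hcmem.2 with h | h
    · exfalso; rw [h] at hwc; linarith
    · exact h
  refine ⟨c, ⟨lt_trans hx₁.1 hc1, lt_trans hc3 hx₃.2⟩, hcmax.isLocalMax (Icc_mem_nhds hc1 hc3), hwc⟩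

lemma limsup_le_one {Λ r₀ r₁ s₂ : ℝ} {A w : ℝ → ℝ} (hEYM : IsEYM Λ A w (Ioo r₀ r₁))
    (hr₀ : 0 < r₀) (hr₁ : r₀ < r₁) (hs₂ : r₀ < s₂) (hs₂' : s₂ ≤ r₁)
    (hApos : ∀ r ∈ Ioo r₀ s₂, 0 < A r)
    (hlt : liminf (fun r => (w r : EReal)) (𝓝[>] r₀) < limsup (fun r => (w r : EReal)) (𝓝[>] r₀)) :
    limsup (fun r => (w r : EReal)) (𝓝[>] r₀) ≤ 1 := by
  by_contra hU
  push_neg at hU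
  have h1 : max (liminf (fun r => (w r : EReal)) (𝓝[>] r₀)) 1
      < limsup (fun r => (w r : EReal)) (𝓝[>] r₀) := max_lt hlt hU
  obtain ⟨β, hβ1, hβ2⟩ := EReal.exists_between_coe_real h1
  obtain ⟨α, hα1, hα2⟩ := EReal.exists_between_coe_real (lt_of_le_of_lt (le_max_left _ _) hβ1)
  have hαβ : α < β := by exact_mod_cast hα2
  have h1β : (1:ℝ) < β := by
    have := lt_of_le_of_lt (le_max_right _ _) hβ1
    exact_mod_cast this
  have hfα : ∃ᶠ r in 𝓝[>] r₀, w r < α := by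
    have := frequently_lt_of_liminf_lt (by isBoundedDefault) hα1
    exact this.mono (fun r hr => by exact_mod_cast hr)
  have hfβ : ∃ᶠ r in 𝓝[>] r₀, β < w r := by
    have := frequently_lt_of_lt_limsup (by isBoundedDefault) hβ2
    exact this.mono (fun r hr => by exact_mod_cast hr)
  have hwcont : ∀ r ∈ Ioo r₀ r₁, ContinuousAt w r :=
    fun r hr => (hEYM.2.1 r hr).continuousAt
  obtain ⟨c, hc, hcmax, hcβ⟩ := exists_localmax hwcont hαβ hfα hfβ hs₂ hs₂'
  have hcI : c ∈ Ioo r₀ r₁ := ⟨hc.1, lt_of_lt_of_le hc.2 hs₂'⟩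
  have hsign := localmax_sign hEYM hr₀ hcI (hApos c hc) hcmax
  nlinarith

lemma gron_aux {r₀ r₁ σ a h W : ℝ} (hr₀ : 0 < r₀) (hσ : r₀ < σ) (hσ' : σ ≤ r₁)
    (ha : 0 < a) (hW : |W| ≤ 2) (hh : |h| ≤ 4*r₁) :
    |2*σ*a*h*(1-h^2) - W*(1-W^2)| ≤ (2*(1+(4*r₁)^2)/r₀) * |σ^2*a*h| + 10 := by
  have habs := abs_le.1 hW
  have habs2 := abs_le.1 hh
  have e1 : |W*(1-W^2)| ≤ 10 := by
    rw [abs_le]; constructor <;> nlinarith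
  have hσpos : 0 < σ := lt_trans hr₀ hσ
  have hLHS : |2*σ*a*h*(1-h^2)| = 2*σ*a*(|h| * |1-h^2|) := by
    have e : 2*σ*a*h*(1-h^2) = (2*σ*a)*(h*(1-h^2)) := by ring
    rw [e, abs_mul (2*σ*a) (h*(1-h^2)), abs_mul h (1-h^2), abs_of_pos (by positivity : (0:ℝ) < 2*σ*a)]
  have hRHS : |σ^2*a*h| = σ^2*a*|h| := by
    rw [abs_mul, abs_mul, abs_of_pos (pow_pos (lt_trans hr₀ hσ) 2), abs_of_pos ha]
  have c1 : |1-h^2| ≤ 1+16*r₁^2 := by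
    rw [abs_le]; constructor <;> nlinarith
  have key : |2*σ*a*h*(1-h^2)| ≤ (2*(1+(4*r₁)^2)/r₀) * |σ^2*a*h| := by
    rw [hLHS, hRHS, div_mul_eq_mul_div, le_div_iff₀ hr₀]
    have c2 : |1-h^2| * r₀ ≤ (1+16*r₁^2)*σ :=
      mul_le_mul c1 (le_of_lt hσ) (le_of_lt hr₀) (by positivity)
    have c3 : 0 ≤ 2*σ*a*|h| := by positivity
    nlinarith [mul_le_mul_of_nonneg_left c2 c3, abs_nonneg h, abs_nonneg (1-h^2)]
  calc |2*σ*a*h*(1-h^2) - W*(1-W^2)| ≤ |2*σ*a*h*(1-h^2)| + |W*(1-W^2)| := abs_sub _ _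
    _ ≤ (2*(1+(4*r₁)^2)/r₀) * |σ^2*a*h| + 10 := add_le_add key e1

lemma mono_limit {a b : ℝ} (hab : a < b) {F : ℝ → ℝ} (hF : MonotoneOn F (Ioo a b)) :
    Tendsto F (𝓝[>] a) atBot ∨ ∃ L, Tendsto F (𝓝[>] a) (𝓝 L) := by
  by_cases hbdd : BddBelow (F '' Ioo a b)
  · right
    refine ⟨sInf (F '' Ioo a b), ?_⟩
    apply tendsto_order.2
    constructor
    · intro x hx
      filter_upwards [Ioo_mem_nhdsGT hab] with r hr
      exact lt_of_lt_of_le hx (csInf_le hbdd ⟨r, hr, rfl⟩)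
    · intro x hx
      have hne : (F '' Ioo a b).Nonempty :=
        ⟨F ((a+b)/2), (a+b)/2, ⟨by linarith, by linarith⟩, rfl⟩
      obtain ⟨y, ⟨p, hp, rfl⟩, hy⟩ := exists_lt_of_csInf_lt hne hx
      filter_upwards [Ioo_mem_nhdsGT hp.1] with r hr
      exact lt_of_le_of_lt (hF ⟨hr.1, lt_trans hr.2 hp.2⟩ hp (le_of_lt hr.2)) hy
  · left
    apply tendsto_atBot.2
    intro N
    obtain ⟨y, ⟨p, hp, rfl⟩, hy⟩ := (not_bddBelow_iff.1 hbdd) N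
    filter_upwards [Ioo_mem_nhdsGT hp.1] with r hr
    exact le_of_lt (lt_of_le_of_lt (hF ⟨hr.1, lt_trans hr.2 hp.2⟩ hp (le_of_lt hr.2)) hy)

lemma mono_comb {Λ r₀ r₁ s₂ c l : ℝ} {A w : ℝ → ℝ} (hEYM : IsEYM Λ A w (Ioo r₀ r₁))
    (hr₀ : 0 < r₀) (hc : 0 < c) (hs₂' : s₂ ≤ r₁)
    (hAc : ∀ r ∈ Ioo r₀ s₂, c ≤ A r) :
    MonotoneOn (fun t => 4*c*(t/2 - t*A t/2 - Λ*t^3/6) + 4*c*l*w t + l^2*t) (Ioo r₀ s₂) := by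
  have hsub : Ioo r₀ s₂ ⊆ Ioo r₀ r₁ := fun t ht => ⟨ht.1, lt_of_lt_of_le ht.2 hs₂'⟩
  have hder : ∀ x ∈ Ioo r₀ s₂, HasDerivAt
      (fun t => 4*c*(t/2 - t*A t/2 - Λ*t^3/6) + 4*c*l*w t + l^2*t)
      (4*c*(A x*(deriv w x)^2 + (1-(w x)^2)^2/(2*x^2)) + 4*c*l*deriv w x + l^2) x := by
    intro x hx
    have d1 := (hasDerivAt_mass hEYM hr₀ (hsub hx)).const_mul (4*c)
    have d2 := ((hEYM.2.1 x (hsub hx)).hasDerivAt).const_mul (4*c*l)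
    have d3 : HasDerivAt (fun t : ℝ => l^2*t) (l^2) x := by
      simpa using (hasDerivAt_id x).const_mul (l^2)
    exact (d1.add d2).add d3
  apply monotoneOn_of_deriv_nonneg (convex_Ioo r₀ s₂)
  · exact fun x hx => ((hder x hx).differentiableAt).continuousAt.continuousWithinAt
  · intro x hx
    rw [interior_Ioo] at hx
    exact ((hder x hx).differentiableAt).differentiableWithinAt
  · intro x hx
    rw [interior_Ioo] at hx
    rw [(hder x hx).deriv]
    have hxpos : 0 < x := lt_trans hr₀ hx.1
    have hP : 0 ≤ (1-(w x)^2)^2/(2*x^2) := by positivity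
    have hcA : c ≤ A x := hAc x hx
    have key : 4*c*(deriv w x)^2*c ≤ 4*c*(deriv w x)^2*(A x) :=
      mul_le_mul_of_nonneg_left hcA (by positivity)
    nlinarith [sq_nonneg (2*c*deriv w x + l)]

lemma u_bound {Λ r₀ r₁ s₀ s₁ : ℝ} {A w : ℝ → ℝ} (hEYM : IsEYM Λ A w (Ioo r₀ r₁))
    (hr₀ : 0 < r₀) (hs₀ : s₀ ≤ r₁) (hs₁ : s₁ ∈ Ioo r₀ s₀)
    (hbds : ∀ r ∈ Ioc r₀ s₁, 0 < A r ∧ |w r| ≤ 2 ∧ |deriv w r| ≤ 4*r₁)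
    (hcrit : deriv w s₁ = 0) :
    ∀ ρ ∈ Ioo r₀ s₁, |ρ^2*A ρ*deriv w ρ| ≤
      gronwallBound 0 (2*(1+(4*r₁)^2)/r₀) 10 (s₁ - r₀) := by
  intro ρ hρ
  set G := 2*(1+(4*r₁)^2)/r₀ with hG
  have hGpos : 0 < G := by positivity
  have hρr₀ : r₀ < ρ := hρ.1
  have hρs₁ : ρ < s₁ := hρ.2
  set T := s₁ - ρ with hT
  have hmem : ∀ t ∈ Icc (0:ℝ) T, s₁ - t ∈ Icc ρ s₁ := by
    intro t ht
    have h1 := ht.1; have h2 := ht.2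
    rw [hT] at h2
    exact ⟨by linarith, by linarith⟩
  have hmemIoc : ∀ t ∈ Icc (0:ℝ) T, s₁ - t ∈ Ioc r₀ s₁ :=
    fun t ht => ⟨lt_of_lt_of_le hρr₀ (hmem t ht).1, (hmem t ht).2⟩
  have hmemI : ∀ t ∈ Icc (0:ℝ) T, s₁ - t ∈ Ioo r₀ r₁ := fun t ht =>
    ⟨(hmemIoc t ht).1, lt_of_le_of_lt (hmemIoc t ht).2 (lt_of_lt_of_le hs₁.2 hs₀)⟩
  set f : ℝ → ℝ := fun t => (s₁-t)^2 * A (s₁-t) * deriv w (s₁-t) with hf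
  set f' : ℝ → ℝ := fun t => (2*(s₁-t)*A (s₁-t)*deriv w (s₁-t)*(1-(deriv w (s₁-t))^2)
      - w (s₁-t)*(1-(w (s₁-t))^2)) * (-1) with hf'
  have hder : ∀ t ∈ Icc (0:ℝ) T, HasDerivAt f (f' t) t := by
    intro t ht
    have hinner : HasDerivAt (fun t : ℝ => s₁ - t) (-1) t := (hasDerivAt_id t).const_sub s₁
    have houter := hasDerivAt_u hEYM hr₀ (hmemI t ht)
    have hcomp := houter.comp t hinner
    exact hcomp
  have hcont : ContinuousOn f (Icc 0 T) :=
    fun t ht => (hder t ht).differentiableAt.continuousAt.continuousWithinAt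
  have hder' : ∀ t ∈ Ico (0:ℝ) T, HasDerivWithinAt f (f' t) (Ici t) t :=
    fun t ht => (hder t (Ico_subset_Icc_self ht)).hasDerivWithinAt
  have h0 : ‖f 0‖ ≤ 0 := by
    simp only [hf, sub_zero, hcrit, mul_zero, norm_zero]
    exact le_refl 0
  have hbound : ∀ t ∈ Ico (0:ℝ) T, ‖f' t‖ ≤ G * ‖f t‖ + 10 := by
    intro t ht
    have ht' := Ico_subset_Icc_self ht
    obtain ⟨hAσ, hwσ, hhσ⟩ := hbds (s₁ - t) (hmemIoc t ht')
    have hσr₁ : s₁ - t ≤ r₁ := le_of_lt (lt_of_le_of_lt (hmemIoc t ht').2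
      (lt_of_lt_of_le hs₁.2 hs₀))
    have := gron_aux hr₀ (hmemIoc t ht').1 hσr₁ hAσ hwσ hhσ
    simp only [hf', hf, Real.norm_eq_abs, mul_neg_one, abs_neg]
    exact this
  have hmain := norm_le_gronwallBound_of_norm_deriv_right_le hcont hder' h0 hbound
  have hend := hmain T (right_mem_Icc.2 (by rw [hT]; linarith))
  have hfT : f T = ρ^2*A ρ*deriv w ρ := by
    simp only [hf, hT, sub_sub_cancel]
  rw [Real.norm_eq_abs, hfT, sub_zero] at hend
  refine le_trans hend ?_
  have hGne : G ≠ 0 := ne_of_gt hGpos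
  rw [gronwallBound_of_K_ne_0 hGne]
  have hTle : T ≤ s₁ - r₀ := by rw [hT]; linarith
  have hexp : Real.exp (G*T) ≤ Real.exp (G*(s₁-r₀)) :=
    Real.exp_le_exp.2 (mul_le_mul_of_nonneg_left hTle (le_of_lt hGpos))
  have h10G : 0 ≤ 10/G := by positivity
  nlinarith [h10G, hexp]

lemma mono_mass {Λ r₀ r₁ s₂ : ℝ} {A w : ℝ → ℝ} (hEYM : IsEYM Λ A w (Ioo r₀ r₁))
    (hr₀ : 0 < r₀) (hs₂' : s₂ ≤ r₁) (hAc : ∀ r ∈ Ioo r₀ s₂, 0 ≤ A r) :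
    MonotoneOn (fun t => t/2 - t*A t/2 - Λ*t^3/6) (Ioo r₀ s₂) := by
  have hsub : Ioo r₀ s₂ ⊆ Ioo r₀ r₁ := fun t ht => ⟨ht.1, lt_of_lt_of_le ht.2 hs₂'⟩
  apply monotoneOn_of_deriv_nonneg (convex_Ioo r₀ s₂)
  · exact fun x hx =>
      ((hasDerivAt_mass hEYM hr₀ (hsub hx)).differentiableAt).continuousAt.continuousWithinAt
  · intro x hx; rw [interior_Ioo] at hx
    exact ((hasDerivAt_mass hEYM hr₀ (hsub hx)).differentiableAt).differentiableWithinAt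
  · intro x hx; rw [interior_Ioo] at hx
    rw [(hasDerivAt_mass hEYM hr₀ (hsub hx)).deriv]
    have hxpos : 0 < x := lt_trans hr₀ hx.1
    have h1 : 0 ≤ A x * (deriv w x)^2 := mul_nonneg (hAc x hx) (sq_nonneg _)
    have h2 : 0 ≤ (1-(w x)^2)^2/(2*x^2) := by positivity
    linarith

set_option maxHeartbeats 2000000 in
/-- if `liminf_{r→r₀⁺} A(r) > 0`, then `w` converges in the
extended reals as `r → r₀⁺`. -/
theorem stmt_5 (Λ r₀ r₁ : ℝ) (A w : ℝ → ℝ)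
    (hr₀ : 0 < r₀) (hr₁ : r₀ < r₁)
    (hEYM : IsEYM Λ A w (Ioo r₀ r₁))
    (hA : 0 < Filter.liminf (fun r => (A r : EReal)) (𝓝[>] r₀)) :
    Filter.liminf (fun r => (w r : EReal)) (𝓝[>] r₀) =
      Filter.limsup (fun r => (w r : EReal)) (𝓝[>] r₀) := by
  have hI : Ioo r₀ r₁ ∈ 𝓝[>] r₀ := Ioo_mem_nhdsGT hr₁
  -- Step A : a positive lower bound c for A near r₀
  obtain ⟨c, hc0, hcA⟩ : ∃ c : ℝ, 0 < c ∧ (c:EReal) < liminf (fun r => (A r : EReal)) (𝓝[>] r₀) := by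
    obtain ⟨c, h1, h2⟩ := EReal.exists_between_coe_real hA
    refine ⟨c, ?_, h2⟩
    exact_mod_cast h1
  have hev : ∀ᶠ r in 𝓝[>] r₀, c < A r ∧ r ∈ Ioo r₀ r₁ := by
    filter_upwards [eventually_lt_of_lt_liminf hcA, hI] with r h1 h2
    exact ⟨by exact_mod_cast h1, h2⟩
  obtain ⟨s₂', hs₂'mem, hs₂'sub⟩ := mem_nhdsGT_iff_exists_Ioo_subset.1 hev
  set s₂ := min s₂' r₁ with hs₂def
  have hs₂pos : r₀ < s₂ := lt_min hs₂'mem hr₁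
  have hs₂le : s₂ ≤ r₁ := min_le_right _ _
  have hAc : ∀ r ∈ Ioo r₀ s₂, c < A r := by
    intro r hr
    exact (hs₂'sub ⟨hr.1, lt_of_lt_of_le hr.2 (min_le_left _ _)⟩).1
  set m : ℝ → ℝ := fun t => t/2 - t*A t/2 - Λ*t^3/6 with hmdef
  have hmono_m : MonotoneOn m (Ioo r₀ s₂) :=
    mono_mass hEYM hr₀ hs₂le (fun r hr => le_of_lt (lt_trans hc0 (hAc r hr)))
  rcases mono_limit hs₂pos hmono_m with hmbot | ⟨M, hmM⟩
  · -- hard case : m → -∞.  Show there is no oscillation.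
    by_contra hne
    have hlt : liminf (fun r => (w r : EReal)) (𝓝[>] r₀)
        < limsup (fun r => (w r : EReal)) (𝓝[>] r₀) :=
      lt_of_le_of_ne liminf_le_limsup hne
    have hApos : ∀ r ∈ Ioo r₀ s₂, 0 < A r := fun r hr => lt_trans hc0 (hAc r hr)
    have hU := limsup_le_one hEYM hr₀ hr₁ hs₂pos hs₂le hApos hlt
    -- same for -w
    have hEYMn := eym_neg hEYM
    have hcoe : (fun r => ((-w r : ℝ) : EReal)) = -(fun r => ((w r : ℝ) : EReal)) := by
      funext r; exact EReal.coe_neg (w r)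
    have hltn : liminf (fun r => ((-w r:ℝ) : EReal)) (𝓝[>] r₀)
        < limsup (fun r => ((-w r:ℝ) : EReal)) (𝓝[>] r₀) := by
      rw [hcoe, EReal.liminf_neg, EReal.limsup_neg]
      exact EReal.neg_lt_neg_iff.2 hlt
    have hUn := limsup_le_one hEYMn hr₀ hr₁ hs₂pos hs₂le hApos hltn
    rw [hcoe, EReal.limsup_neg] at hUn
    have hLn : ((-1:ℝ) : EReal) ≤ liminf (fun r => (w r : EReal)) (𝓝[>] r₀) := by
      have h := EReal.neg_le.1 hUn
      have e : ((-1:ℝ) : EReal) = -(1:EReal) := by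
        rw [EReal.coe_neg]; norm_num
      rw [e]; exact h
    -- eventual bounds on w
    have hub : ∀ᶠ r in 𝓝[>] r₀, w r < 2 := by
      have h2 : limsup (fun r => (w r : EReal)) (𝓝[>] r₀) < ((2:ℝ):EReal) := by
        refine lt_of_le_of_lt hU ?_
        exact_mod_cast (show (1:ℝ) < 2 by norm_num)
      exact (eventually_lt_of_limsup_lt h2).mono (fun r hr => by exact_mod_cast hr)
    have hlb : ∀ᶠ r in 𝓝[>] r₀, -2 < w r := by
      have h2 : ((-2:ℝ):EReal) < liminf (fun r => (w r : EReal)) (𝓝[>] r₀) := by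
        refine lt_of_lt_of_le ?_ hLn
        exact_mod_cast (by norm_num : (-2:ℝ) < -1)
      exact (eventually_lt_of_lt_liminf h2).mono (fun r hr => by exact_mod_cast hr)
    -- A is eventually very large
    set A₀ : ℝ := 2 + 2 * |Λ| * r₁^2 + 10/r₀^2 with hA₀def
    have hA₀pos : 0 < A₀ := by positivity
    have hAbig : ∀ᶠ r in 𝓝[>] r₀, A₀ ≤ A r := by
      have hY : ∀ᶠ r in 𝓝[>] r₀, m r ≤ -(r₁/2)*(A₀ + |Λ| * r₁^2/3) :=
        tendsto_atBot.1 hmbot _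
      filter_upwards [hY, hI] with r hmr hrI
      have hrpos : 0 < r := lt_trans hr₀ hrI.1
      have hrr₁ : r < r₁ := hrI.2
      have hid : A r * r = r - 2*(m r) - Λ*r^3/3 := by
        rw [hmdef]; ring
      have hΛ3 : Λ*r^3 ≤ |Λ| * r₁^3 := by
        have h1 : Λ*r^3 ≤ |Λ*r^3| := le_abs_self _
        have h2 : |Λ*r^3| = |Λ| * |r^3| := abs_mul _ _
        have h3 : |r^3| = r^3 := abs_of_pos (by positivity)
        have h4 : |Λ| * r^3 ≤ |Λ| * r₁^3 :=
          mul_le_mul_of_nonneg_left (pow_le_pow_left₀ hrpos.le hrr₁.le 3) (abs_nonneg Λ)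
        rw [h2, h3] at h1
        linarith
      have key : A₀ * r ≤ A r * r := by
        rw [hid]
        clear_value A₀ m
        have f3 : A₀ * r ≤ A₀ * r₁ := mul_le_mul_of_nonneg_left hrr₁.le hA₀pos.le
        have f1 : r₁*A₀ + |Λ| * r₁^3/3 ≤ -2*(m r) := by nlinarith [hmr]
        nlinarith [f1, f3, hΛ3, hrpos]
      exact le_of_mul_le_mul_right key hrpos
    -- choose an interval where all bounds hold
    have hall : ∀ᶠ r in 𝓝[>] r₀, (A₀ ≤ A r ∧ |w r| ≤ 2) ∧ r ∈ Ioo r₀ s₂ := by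
      filter_upwards [hAbig, hub, hlb, Ioo_mem_nhdsGT hs₂pos] with r h1 h2 h3 h4
      exact ⟨⟨h1, abs_le.2 ⟨le_of_lt h3, le_of_lt h2⟩⟩, h4⟩
    obtain ⟨s₀', hs₀'mem, hs₀'sub⟩ := mem_nhdsGT_iff_exists_Ioo_subset.1 hall
    set s₀ := min s₀' s₂ with hs₀def
    have hs₀pos : r₀ < s₀ := lt_min hs₀'mem hs₂pos
    have hs₀r₁ : s₀ ≤ r₁ := le_trans (min_le_right _ _) hs₂le
    have hbig : ∀ r ∈ Ioo r₀ s₀, A₀ ≤ A r ∧ |w r| ≤ 2 := by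
      intro r hr
      exact (hs₀'sub ⟨hr.1, lt_of_lt_of_le hr.2 (min_le_left _ _)⟩).1
    -- a critical point s₁ close to r₀
    obtain ⟨α, hα1, hα2⟩ := EReal.exists_between_coe_real hlt
    obtain ⟨β, hβ1, hβ2⟩ := EReal.exists_between_coe_real hα2
    have hαβ : α < β := by exact_mod_cast hβ1
    have hfα : ∃ᶠ r in 𝓝[>] r₀, w r < α :=
      (frequently_lt_of_liminf_lt (by isBoundedDefault) hα1).mono
        (fun r hr => by exact_mod_cast hr)
    have hfβ : ∃ᶠ r in 𝓝[>] r₀, β < w r :=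
      (frequently_lt_of_lt_limsup (by isBoundedDefault) hβ2).mono
        (fun r hr => by exact_mod_cast hr)
    have hwcont : ∀ r ∈ Ioo r₀ r₁, ContinuousAt w r :=
      fun r hr => (hEYM.2.1 r hr).continuousAt
    obtain ⟨s₁, hs₁I, hs₁max, _⟩ := exists_localmax hwcont hαβ hfα hfβ hs₀pos hs₀r₁
    have hcrit : deriv w s₁ = 0 := hs₁max.deriv_eq_zero
    -- derivative bounds
    have hup := deriv_w_le hEYM hr₀ hr₁ hs₀r₁ hs₁I hbig hcrit
    have hbign : ∀ r ∈ Ioo r₀ s₀, A₀ ≤ A r ∧ |(fun t => -w t) r| ≤ 2 := by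
      intro r hr
      refine ⟨(hbig r hr).1, ?_⟩
      simp only [abs_neg]
      exact (hbig r hr).2
    have hcritn : deriv (fun t => -w t) s₁ = 0 := by
      rw [deriv.fun_neg, hcrit, neg_zero]
    have hdn := deriv_w_le hEYMn hr₀ hr₁ hs₀r₁ hs₁I hbign hcritn
    have habs : ∀ r ∈ Ioc r₀ s₁, |deriv w r| ≤ 4*r₁ := by
      intro r hr
      refine abs_le.2 ⟨?_, hup r hr⟩
      have := hdn r hr
      rw [deriv.fun_neg] at this
      linarith
    have hbds : ∀ r ∈ Ioc r₀ s₁, 0 < A r ∧ |w r| ≤ 2 ∧ |deriv w r| ≤ 4*r₁ := by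
      intro r hr
      have hrI : r ∈ Ioo r₀ s₀ := ⟨hr.1, lt_of_le_of_lt hr.2 hs₁I.2⟩
      exact ⟨lt_of_lt_of_le hA₀pos (hbig r hrI).1, (hbig r hrI).2, habs r hr⟩
    have hubnd := u_bound hEYM hr₀ hs₀r₁ hs₁I hbds hcrit
    set Bu := gronwallBound 0 (2*(1+(4*r₁)^2)/r₀) 10 (s₁ - r₀) with hBudef
    have hr₁pos : 0 < r₁ := lt_trans hr₀ hr₁
    set p₀ := (r₀ + s₁)/2 with hp₀def
    have hp₀mem : p₀ ∈ Ioo r₀ s₁ := ⟨by rw [hp₀def]; linarith [hs₁I.1], by rw [hp₀def]; linarith [hs₁I.1]⟩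
    have hBu0 : 0 ≤ Bu := le_trans (abs_nonneg _) (hubnd p₀ hp₀mem)
    set Bm := Bu*(4*r₁)/r₀^2 + 25/(2*r₀^2) with hBmdef
    have hBm0 : 0 ≤ Bm := by positivity
    -- m has derivative bounded above by Bm on Ioo r₀ s₁
    have hmono2 : MonotoneOn (fun t => Bm*t - m t) (Ioo r₀ s₁) := by
      have hsubI : Ioo r₀ s₁ ⊆ Ioo r₀ r₁ := fun t ht =>
        ⟨ht.1, lt_of_lt_of_le (lt_trans ht.2 hs₁I.2) hs₀r₁⟩
      have hder : ∀ x ∈ Ioo r₀ s₁, HasDerivAt (fun t => Bm*t - m t)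
          (Bm - (A x*(deriv w x)^2 + (1-(w x)^2)^2/(2*x^2))) x := by
        intro x hx
        have d1 : HasDerivAt (fun t : ℝ => Bm*t) Bm x := by
          simpa using (hasDerivAt_id x).const_mul Bm
        exact d1.sub (hasDerivAt_mass hEYM hr₀ (hsubI hx))
      apply monotoneOn_of_deriv_nonneg (convex_Ioo r₀ s₁)
      · exact fun x hx => ((hder x hx).differentiableAt).continuousAt.continuousWithinAt
      · intro x hx
        rw [interior_Ioo] at hx
        exact ((hder x hx).differentiableAt).differentiableWithinAt
      · intro x hx
        rw [interior_Ioo] at hx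
        rw [(hder x hx).deriv]
        have hxIoc : x ∈ Ioc r₀ s₁ := ⟨hx.1, le_of_lt hx.2⟩
        obtain ⟨hAx, hwx, hdx⟩ := hbds x hxIoc
        have hxpos : 0 < x := lt_trans hr₀ hx.1
        -- A x * w'^2 ≤ Bu*4r₁/r₀²
        have e1 : x^2*(A x*(deriv w x)^2) = |x^2*A x*deriv w x| * |deriv w x| := by
          rw [← abs_mul]
          have hnn : (0:ℝ) ≤ x^2*A x*deriv w x*deriv w x := by
            nlinarith [mul_nonneg (mul_nonneg (sq_nonneg x) hAx.le) (sq_nonneg (deriv w x))]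
          rw [abs_of_nonneg hnn]
          ring
        have e2 : |x^2*A x*deriv w x| * |deriv w x| ≤ Bu * (4*r₁) :=
          mul_le_mul (hubnd x hx) hdx (abs_nonneg _) hBu0
        have e3 : A x*(deriv w x)^2 ≤ Bu*(4*r₁)/r₀^2 := by
          rw [le_div_iff₀ (by positivity : (0:ℝ) < r₀^2)]
          have e4 : A x*(deriv w x)^2*r₀^2 ≤ A x*(deriv w x)^2*x^2 := by
            apply mul_le_mul_of_nonneg_left _ (mul_nonneg hAx.le (sq_nonneg (deriv w x)))
            exact pow_le_pow_left₀ hr₀.le hx.1.le 2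
          nlinarith [e1, e2]
        have e5 : (1-(w x)^2)^2/(2*x^2) ≤ 25/(2*r₀^2) := by
          have hx2 : r₀^2 ≤ x^2 := pow_le_pow_left₀ hr₀.le hx.1.le 2
          apply div_le_div₀ (by norm_num) _ (by positivity) (by linarith)
          have hw4 : (w x)^2 ≤ 4 := by nlinarith [abs_le.1 hwx]
          have q1 : (0:ℝ) ≤ 4 + (w x)^2 := by nlinarith [sq_nonneg (w x)]
          have q2 : (0:ℝ) ≤ 6 - (w x)^2 := by nlinarith [hw4]
          nlinarith [mul_nonneg q1 q2]
        rw [hBmdef]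
        linarith
    -- contradiction with m → -∞
    have hcomp : ∀ r ∈ Ioo r₀ p₀, m p₀ - Bm*(p₀ - r₀) ≤ m r := by
      intro r hr
      have h1 : r ∈ Ioo r₀ s₁ := ⟨hr.1, lt_trans hr.2 hp₀mem.2⟩
      have := hmono2 h1 hp₀mem (le_of_lt hr.2)
      dsimp only at this
      have hrr₀ : r₀ < r := hr.1
      clear_value Bm Bu p₀ m
      nlinarith [this, mul_nonneg hBm0 (by linarith : (0:ℝ) ≤ r - r₀)]
    have hevbot : ∀ᶠ r in 𝓝[>] r₀, m r < m p₀ - Bm*(p₀ - r₀) - 1 := by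
      have := tendsto_atBot.1 hmbot (m p₀ - Bm*(p₀ - r₀) - 2)
      exact this.mono (fun r hr => by linarith)
    obtain ⟨r, hr1, hr2⟩ := (hevbot.and (Ioo_mem_nhdsGT hp₀mem.1)).exists
    have := hcomp r hr2
    linarith
  · -- case : m converges to a real number M
    set F₁ : ℝ → ℝ := fun t => 4*c*(t/2 - t*A t/2 - Λ*t^3/6) + 4*c*1*w t + 1^2*t with hF₁def
    have hmonoF : MonotoneOn F₁ (Ioo r₀ s₂) :=
      mono_comb hEYM hr₀ hc0 hs₂le (fun r hr => le_of_lt (hAc r hr))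
    have hF₁r : ∀ r, F₁ r = 4*c*(m r) + 4*c*(w r) + r := by
      intro r; rw [hF₁def, hmdef]; ring
    rcases mono_limit hs₂pos hmonoF with hFbot | ⟨L, hFL⟩
    · -- w → -∞
      have hw_bot : Tendsto (fun r => (w r : EReal)) (𝓝[>] r₀) (𝓝 ⊥) := by
        apply EReal.tendsto_nhds_bot_iff_real.2
        intro x
        have e1 : ∀ᶠ r in 𝓝[>] r₀, F₁ r ≤ 4*c*x + 4*c*(M-1) + r₀ - 1 :=
          tendsto_atBot.1 hFbot _
        have e2 : ∀ᶠ r in 𝓝[>] r₀, M - 1 < m r :=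
          hmM.eventually (eventually_gt_nhds (by linarith))
        filter_upwards [e1, e2, self_mem_nhdsWithin] with r h1 h2 h3
        have hwr : w r < x := by
          rw [hF₁r r] at h1
          have hr₀r : r₀ < r := h3
          nlinarith [mul_pos hc0 (sub_pos.2 h2)]
        exact_mod_cast hwr
      exact hw_bot.liminf_eq.trans hw_bot.limsup_eq.symm
    · -- w converges to a real number
      have hid : Tendsto (fun r : ℝ => r) (𝓝[>] r₀) (𝓝 r₀) :=
        tendsto_id.mono_left nhdsWithin_le_nhds
      have hw_lim : Tendsto w (𝓝[>] r₀) (𝓝 ((L - 4*c*M - r₀)/(4*c))) := by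
        have h1 : Tendsto (fun r => (F₁ r - 4*c*(m r) - r)/(4*c)) (𝓝[>] r₀)
            (𝓝 ((L - 4*c*M - r₀)/(4*c))) :=
          (((hFL.sub (hmM.const_mul (4*c))).sub hid).div_const (4*c))
        apply h1.congr
        intro r
        rw [hF₁r r]
        field_simp
        ring
      have hw_coe : Tendsto (fun r => (w r : EReal)) (𝓝[>] r₀)
          (𝓝 (((L - 4*c*M - r₀)/(4*c) : ℝ) : EReal)) := EReal.tendsto_coe.2 hw_lim
      exact hw_coe.liminf_eq.trans hw_coe.limsup_eq.symm
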